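/- Let H and H₀ be bounded self-adjoint operators on a complex Hilbert space 𝓗 and let Q be a bounded operator on 𝓗 commuting with H₀ (Q H₀ = H₀ Q). Then (H − i)⁻¹ [H, Q] (H + i)⁻¹ = −(I + 2i(H − i)⁻¹) · [(H + i)⁻¹ − (H₀ + i)⁻¹, Q]. In particular, if (H + i)⁻¹ − (H₀ + i)⁻¹ is trace class, then K := (H − i)⁻¹ [H, Q] (H + i)⁻¹ is trace class and ‖K‖₁ ≤ 6 · ‖Q‖ · ‖(H + i)⁻¹ − (H₀ + i)⁻¹‖₁. -/

import Mathlib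

set_option linter.unusedSectionVars false
set_option linter.unusedVariables false
set_option maxHeartbeats 1000000


open ContinuousLinearMap

variable {𝓗 : Type*} [NormedAddCommGroup 𝓗] [InnerProductSpace ℂ 𝓗] [CompleteSpace 𝓗]

/-- An operator `T` on a complex Hilbert space is trace class iff the sums
`∑ᵢ |⟨fᵢ, T eᵢ⟩|` over finite orthonormal families `(eᵢ)`, `(fᵢ)` are uniformly bounded. -/
def IsTraceClass (T : 𝓗 →L[ℂ] 𝓗) : Prop :=
  ∃ M : ℝ, ∀ (n : ℕ) (e f : Fin n → 𝓗), Orthonormal ℂ e → Orthonormal ℂ f →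
    ∑ i, ‖(inner ℂ (f i) (T (e i)) : ℂ)‖ ≤ M

/-- The trace norm `‖T‖₁ = sup { ∑ᵢ |⟨fᵢ, T eᵢ⟩| }`, the supremum being taken over all
finite orthonormal families `(eᵢ)`, `(fᵢ)` in the Hilbert space. -/
noncomputable def traceNorm (T : 𝓗 →L[ℂ] 𝓗) : ℝ :=
  sSup { x : ℝ | ∃ (n : ℕ) (e f : Fin n → 𝓗), Orthonormal ℂ e ∧ Orthonormal ℂ f ∧
    x = ∑ i, ‖(inner ℂ (f i) (T (e i)) : ℂ)‖ }

/-- An operator `T` is Hilbert–Schmidt iff the sums `∑ᵢ ‖T eᵢ‖²` over finite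
orthonormal families `(eᵢ)` are uniformly bounded. -/
def IsHilbertSchmidt (T : 𝓗 →L[ℂ] 𝓗) : Prop :=
  ∃ M : ℝ, ∀ (n : ℕ) (e : Fin n → 𝓗), Orthonormal ℂ e → ∑ i, ‖T (e i)‖ ^ 2 ≤ M

/-- A fixed Hilbert basis of `𝓗`. -/
noncomputable def aHilbertBasis (𝓗 : Type*) [NormedAddCommGroup 𝓗] [InnerProductSpace ℂ 𝓗]
    [CompleteSpace 𝓗] : HilbertBasis (exists_hilbertBasis ℂ 𝓗).choose ℂ 𝓗 :=
  (exists_hilbertBasis ℂ 𝓗).choose_spec.choose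

/-- The trace of an operator, computed in a fixed Hilbert basis.  For a trace class
operator this is independent of the chosen basis and equals the canonical trace. -/
noncomputable def opTrace (T : 𝓗 →L[ℂ] 𝓗) : ℂ :=
  ∑' i, (inner ℂ (aHilbertBasis 𝓗 i) (T (aHilbertBasis 𝓗 i)) : ℂ)

/-- The Cayley transform `(i - H)(i + H)⁻¹` of a bounded self-adjoint operator `H`
(for self-adjoint `H` the operator `i + H` is invertible in `B(𝓗)`, so `Ring.inverse`
produces its genuine inverse). -/
noncomputable def cayley (H : 𝓗 →L[ℂ] 𝓗) : 𝓗 →L[ℂ] 𝓗 :=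
  (Complex.I • (1 : 𝓗 →L[ℂ] 𝓗) - H) * Ring.inverse (Complex.I • (1 : 𝓗 →L[ℂ] 𝓗) + H)

/-- equations (2.4x)–(2.5x).  For bounded self-adjoint `H`, `H₀` and a
bounded operator `Q` commuting with `H₀`:
`(H - i)⁻¹ [H, Q] (H + i)⁻¹ = -(I + 2i (H - i)⁻¹) [(H + i)⁻¹ - (H₀ + i)⁻¹, Q]`;
in particular if `(H + i)⁻¹ - (H₀ + i)⁻¹` is trace class then
`K := (H - i)⁻¹ [H, Q] (H + i)⁻¹` is trace class with
`‖K‖₁ ≤ 6 ‖Q‖ ‖(H + i)⁻¹ - (H₀ + i)⁻¹‖₁`. -/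
lemma exists_unitary_half (b : 𝓗 →L[ℂ] 𝓗) (hb : IsSelfAdjoint b) (hb1 : ‖b‖ ≤ 1) :
    ∃ u : 𝓗 →L[ℂ] 𝓗, star u * u = 1 ∧ u * star u = 1 ∧ b = (2⁻¹ : ℂ) • (u + star u) := by
  rcases subsingleton_or_nontrivial 𝓗 with h | h
  · exact ⟨0, Subsingleton.elim _ _, Subsingleton.elim _ _, Subsingleton.elim _ _⟩
  have hbn : IsStarNormal b := hb.isStarNormal
  set f : ℂ → ℂ := fun z => z + Complex.I * (Real.sqrt (1 - z.re ^ 2) : ℝ) with hf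
  have hfc : Continuous f := by fun_prop
  have hspec : ∀ z ∈ spectrum ℂ b, z = (z.re : ℂ) ∧ z.re ^ 2 ≤ 1 := by
    intro z hz
    refine ⟨hb.mem_spectrum_eq_re hz, ?_⟩
    have h1 : ‖z‖ ≤ 1 := le_trans (spectrum.norm_le_norm_of_mem hz) hb1
    have h2 : |z.re| ≤ ‖z‖ := by
      exact Complex.abs_re_le_norm z
    nlinarith [abs_nonneg z.re, sq_abs z.re]
  have hsq : ∀ z ∈ spectrum ℂ b,
      ((Real.sqrt (1 - z.re ^ 2) : ℝ) : ℂ) ^ 2 = 1 - (z.re : ℂ) ^ 2 := by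
    intro z hz
    rw [← Complex.ofReal_pow, Real.sq_sqrt (by linarith [(hspec z hz).2])]
    push_cast; ring
  have hstar : ∀ z ∈ spectrum ℂ b,
      star (f z) = (z.re : ℂ) - Complex.I * (Real.sqrt (1 - z.re ^ 2) : ℝ) := by
    intro z hz
    rw [hf]; simp only []
    rw [(hspec z hz).1]
    simp [Complex.ext_iff]
  refine ⟨cfc f b, ?_, ?_, ?_⟩
  · rw [← cfc_star, ← cfc_mul _ _ b (by fun_prop) (by fun_prop), ← cfc_one (R := ℂ) b]
    apply cfc_congr
    intro z hz
    have h1 := (hspec z hz).1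
    have h2 := hsq z hz
    simp only [Pi.one_apply, hstar z hz, hf]
    rw [h1]
    simp only [Complex.ofReal_re, Complex.star_def, map_add, map_mul, Complex.conj_ofReal, Complex.conj_I]
    linear_combination h2 - ((Real.sqrt (1 - z.re ^ 2) : ℂ))^2 * Complex.I_sq
  · rw [← cfc_star, ← cfc_mul _ _ b (by fun_prop) (by fun_prop), ← cfc_one (R := ℂ) b]
    apply cfc_congr
    intro z hz
    have h1 := (hspec z hz).1
    have h2 := hsq z hz
    simp only [Pi.one_apply, hstar z hz, hf]
    rw [h1]
    simp only [Complex.ofReal_re, Complex.star_def, map_add, map_mul, Complex.conj_ofReal, Complex.conj_I]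
    linear_combination h2 - ((Real.sqrt (1 - z.re ^ 2) : ℂ))^2 * Complex.I_sq
  · rw [← cfc_star, ← cfc_add b _ _ (by fun_prop) (by fun_prop)]
    have : cfc (fun z => f z + star (f z)) b = cfc (fun z : ℂ => 2 * z) b := by
      apply cfc_congr
      intro z hz
      simp only [hstar z hz, hf]
      rw [(hspec z hz).1]
      simp only [Complex.ofReal_re, Complex.star_def, map_add, map_mul, Complex.conj_ofReal, Complex.conj_I]
      ring
    rw [this, cfc_const_mul _ _ b (by fun_prop), cfc_id' ℂ b, smul_smul]
    norm_num

def TNB (T : 𝓗 →L[ℂ] 𝓗) (c : ℝ) : Prop :=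
  ∀ (n : ℕ) (e f : Fin n → 𝓗), Orthonormal ℂ e → Orthonormal ℂ f →
    ∑ i, ‖(inner ℂ (f i) (T (e i)) : ℂ)‖ ≤ c

lemma orthonormal_fin_zero (g : Fin 0 → 𝓗) : Orthonormal ℂ g :=
  ⟨fun i => i.elim0, fun {i} => i.elim0⟩

lemma zero_mem_traceSet (T : 𝓗 →L[ℂ] 𝓗) :
    (0:ℝ) ∈ { x : ℝ | ∃ (n : ℕ) (e f : Fin n → 𝓗), Orthonormal ℂ e ∧ Orthonormal ℂ f ∧
      x = ∑ i, ‖(inner ℂ (f i) (T (e i)) : ℂ)‖ } :=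
  ⟨0, fun i => i.elim0, fun i => i.elim0, orthonormal_fin_zero _, orthonormal_fin_zero _, by simp⟩

lemma TNB.isTraceClass {T : 𝓗 →L[ℂ] 𝓗} {c : ℝ} (h : TNB T c) : IsTraceClass T := ⟨c, h⟩

lemma TNB.traceNorm_le {T : 𝓗 →L[ℂ] 𝓗} {c : ℝ} (h : TNB T c) : traceNorm T ≤ c := by
  apply csSup_le ⟨0, zero_mem_traceSet T⟩
  rintro x ⟨n, e, f, he, hf, rfl⟩
  exact h n e f he hf

lemma IsTraceClass.tnb {T : 𝓗 →L[ℂ] 𝓗} (h : IsTraceClass T) : TNB T (traceNorm T) := by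
  obtain ⟨M, hM⟩ := h
  intro n e f he hf
  refine le_csSup ⟨M, ?_⟩ ⟨n, e, f, he, hf, rfl⟩
  rintro x ⟨n, e, f, he, hf, rfl⟩
  exact hM n e f he hf

lemma IsTraceClass.traceNorm_nonneg {T : 𝓗 →L[ℂ] 𝓗} (h : IsTraceClass T) : 0 ≤ traceNorm T := by
  obtain ⟨M, hM⟩ := h
  refine le_csSup ⟨M, ?_⟩ (zero_mem_traceSet T)
  rintro x ⟨n, e, f, he, hf, rfl⟩
  exact hM n e f he hf

lemma TNB.mono {T : 𝓗 →L[ℂ] 𝓗} {c c' : ℝ} (h : TNB T c) (hcc : c ≤ c') : TNB T c' :=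
  fun n e f he hf => le_trans (h n e f he hf) hcc

lemma TNB.add {T T' : 𝓗 →L[ℂ] 𝓗} {c c' : ℝ} (h : TNB T c) (h' : TNB T' c') :
    TNB (T + T') (c + c') := by
  intro n e f he hf
  calc ∑ i, ‖(inner ℂ (f i) ((T + T') (e i)) : ℂ)‖
      ≤ ∑ i, (‖(inner ℂ (f i) (T (e i)) : ℂ)‖ + ‖(inner ℂ (f i) (T' (e i)) : ℂ)‖) := by
        refine Finset.sum_le_sum fun i _ => ?_
        rw [ContinuousLinearMap.add_apply, inner_add_right]
        exact norm_add_le _ _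
    _ = (∑ i, ‖(inner ℂ (f i) (T (e i)) : ℂ)‖) + ∑ i, ‖(inner ℂ (f i) (T' (e i)) : ℂ)‖ :=
        Finset.sum_add_distrib
    _ ≤ c + c' := add_le_add (h n e f he hf) (h' n e f he hf)

lemma TNB.smul {T : 𝓗 →L[ℂ] 𝓗} {c : ℝ} (z : ℂ) (h : TNB T c) : TNB (z • T) (‖z‖ * c) := by
  intro n e f he hf
  calc ∑ i, ‖(inner ℂ (f i) ((z • T) (e i)) : ℂ)‖
      = ∑ i, ‖z‖ * ‖(inner ℂ (f i) (T (e i)) : ℂ)‖ := by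
        refine Finset.sum_congr rfl fun i _ => ?_
        rw [ContinuousLinearMap.smul_apply, inner_smul_right, norm_mul]
    _ = ‖z‖ * ∑ i, ‖(inner ℂ (f i) (T (e i)) : ℂ)‖ := (Finset.mul_sum _ _ _).symm
    _ ≤ ‖z‖ * c := mul_le_mul_of_nonneg_left (h n e f he hf) (norm_nonneg z)

lemma TNB.neg {T : 𝓗 →L[ℂ] 𝓗} {c : ℝ} (h : TNB T c) : TNB (-T) c := by
  intro n e f he hf
  calc ∑ i, ‖(inner ℂ (f i) ((-T) (e i)) : ℂ)‖
      = ∑ i, ‖(inner ℂ (f i) (T (e i)) : ℂ)‖ := by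
        refine Finset.sum_congr rfl fun i _ => ?_
        rw [ContinuousLinearMap.neg_apply, inner_neg_right, norm_neg]
    _ ≤ c := h n e f he hf

lemma TNB.unitary_left {T U : 𝓗 →L[ℂ] 𝓗} {c : ℝ} (hU1 : star U * U = 1) (hU2 : U * star U = 1)
    (h : TNB T c) : TNB (U * T) c := by
  intro n e f he hf
  have key : ∀ x y : 𝓗, (inner ℂ ((star U) x) ((star U) y) : ℂ) = inner ℂ x y := by
    intro x y
    rw [star_eq_adjoint, adjoint_inner_left]
    rw [show U ((adjoint U) y) = (U * star U) y by rw [star_eq_adjoint]; rfl, hU2,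
      ContinuousLinearMap.one_apply]
  have hf' : Orthonormal ℂ (fun i => (star U) (f i)) := by
    rw [orthonormal_iff_ite] at hf ⊢
    intro i j; rw [key]; exact hf i j
  have := h n e (fun i => (star U) (f i)) he hf'
  refine le_trans (le_of_eq ?_) this
  refine Finset.sum_congr rfl fun i _ => ?_
  rw [ContinuousLinearMap.mul_apply, show (inner ℂ ((star U) (f i)) (T (e i)) : ℂ)
    = inner ℂ (f i) (U (T (e i))) from by rw [star_eq_adjoint, adjoint_inner_left]]

lemma TNB.unitary_right {T U : 𝓗 →L[ℂ] 𝓗} {c : ℝ} (hU1 : star U * U = 1)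
    (h : TNB T c) : TNB (T * U) c := by
  intro n e f he hf
  have key : ∀ x y : 𝓗, (inner ℂ (U x) (U y) : ℂ) = inner ℂ x y := by
    intro x y
    have h0 : (inner ℂ ((adjoint U) (U x)) y : ℂ) = inner ℂ (U x) (U y) :=
      adjoint_inner_left U y (U x)
    rw [← h0, show (adjoint U) (U x) = (star U * U) x from by
      rw [star_eq_adjoint]; rfl, hU1, ContinuousLinearMap.one_apply]
  have he' : Orthonormal ℂ (fun i => U (e i)) := by
    rw [orthonormal_iff_ite] at he ⊢
    intro i j; rw [key]; exact he i j
  exact h n (fun i => U (e i)) f he' hf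

lemma TNB.mul_left {T : 𝓗 →L[ℂ] 𝓗} {c : ℝ} (Q : 𝓗 →L[ℂ] 𝓗) (hc : 0 ≤ c) (h : TNB T c) :
    TNB (Q * T) (2 * ‖Q‖ * c) := by
  rcases eq_or_ne Q 0 with rfl | hQ0
  · intro n e f he hf
    simp [inner_zero_right]
  · set a : 𝓗 →L[ℂ] 𝓗 := ((‖Q‖ : ℂ))⁻¹ • Q with ha_def
    have hQnz : ((‖Q‖ : ℂ)) ≠ 0 := by
      exact_mod_cast Complex.ofReal_ne_zero.mpr (norm_ne_zero_iff.mpr hQ0)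
    have hQa : Q = ((‖Q‖ : ℂ)) • a := by
      rw [ha_def, smul_smul, mul_inv_cancel₀ hQnz, one_smul]
    have ha1 : ‖a‖ ≤ 1 := by
      rw [ha_def, norm_smul, norm_inv]
      simp only [Complex.norm_real, Real.norm_eq_abs, abs_norm]
      rw [inv_mul_cancel₀ (norm_ne_zero_iff.mpr hQ0)]
    set x : 𝓗 →L[ℂ] 𝓗 := (2⁻¹:ℂ) • (a + star a) with hx_def
    set y : 𝓗 →L[ℂ] 𝓗 := (-(Complex.I) * 2⁻¹ : ℂ) • (a - star a) with hy_def
    have hxsa : IsSelfAdjoint x := by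
      show star x = x
      rw [hx_def]
      simp only [star_smul, star_add, star_star]
      rw [add_comm (star a) a]
      congr 1
      simp [Complex.ext_iff]
    have hysa : IsSelfAdjoint y := by
      show star y = y
      rw [hy_def]
      simp only [star_smul, star_sub, star_star, star_mul', star_neg, Complex.star_def,
        Complex.conj_I, map_inv₀, map_ofNat]
      module
    have hx1 : ‖x‖ ≤ 1 := by
      rw [hx_def, norm_smul]
      have h1 : ‖(2⁻¹:ℂ)‖ = 2⁻¹ := by norm_num
      rw [h1]
      have h2 : ‖a + star a‖ ≤ 2 := by
        calc ‖a + star a‖ ≤ ‖a‖ + ‖star a‖ := norm_add_le _ _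
        _ ≤ 2 := by rw [norm_star]; linarith
      linarith
    have hy1 : ‖y‖ ≤ 1 := by
      rw [hy_def, norm_smul]
      have h1 : ‖(-(Complex.I) * 2⁻¹ : ℂ)‖ = 2⁻¹ := by simp [norm_mul]
      rw [h1]
      have h2 : ‖a - star a‖ ≤ 2 := by
        calc ‖a - star a‖ ≤ ‖a‖ + ‖star a‖ := norm_sub_le _ _
        _ ≤ 2 := by rw [norm_star]; linarith
      linarith
    have hxy : a = x + Complex.I • y := by
      have hs : Complex.I • y = (2⁻¹:ℂ) • (a - star a) := by
        rw [hy_def, smul_smul]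
        congr 1
        linear_combination (-(2⁻¹:ℂ)) * Complex.I_sq
      rw [hs, hx_def]; module
    obtain ⟨u₁, hu₁a, hu₁b, hu₁c⟩ := exists_unitary_half x hxsa hx1
    obtain ⟨u₂, hu₂a, hu₂b, hu₂c⟩ := exists_unitary_half y hysa hy1
    have l1 : TNB (u₁ * T) c := h.unitary_left hu₁a hu₁b
    have l2 : TNB (star u₁ * T) c :=
      h.unitary_left (by rw [star_star]; exact hu₁b) (by rw [star_star]; exact hu₁a)
    have l3 : TNB (u₂ * T) c := h.unitary_left hu₂a hu₂b
    have l4 : TNB (star u₂ * T) c :=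
      h.unitary_left (by rw [star_star]; exact hu₂b) (by rw [star_star]; exact hu₂a)
    have hhalf : ‖(2⁻¹:ℂ)‖ = 2⁻¹ := by norm_num
    have hxT : TNB (x * T) c := by
      have heq : x * T = (2⁻¹:ℂ) • (u₁ * T) + (2⁻¹:ℂ) • (star u₁ * T) := by
        rw [hu₁c, smul_mul_assoc, add_mul, smul_add]
      have h5 := (l1.smul (2⁻¹:ℂ)).add (l2.smul (2⁻¹:ℂ))
      rw [← heq] at h5
      refine h5.mono ?_
      rw [hhalf]; linarith
    have hyT : TNB (y * T) c := by
      have heq : y * T = (2⁻¹:ℂ) • (u₂ * T) + (2⁻¹:ℂ) • (star u₂ * T) := by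
        rw [hu₂c, smul_mul_assoc, add_mul, smul_add]
      have h5 := (l3.smul (2⁻¹:ℂ)).add (l4.smul (2⁻¹:ℂ))
      rw [← heq] at h5
      refine h5.mono ?_
      rw [hhalf]; linarith
    have haT : TNB (a * T) (c + ‖Complex.I‖ * c) := by
      have heq : a * T = x * T + Complex.I • (y * T) := by
        rw [hxy]; simp only [add_mul, smul_mul_assoc]
      have h5 := hxT.add (hyT.smul Complex.I)
      rwa [← heq] at h5
    have hfin := haT.smul ((‖Q‖ : ℂ))
    rw [← smul_mul_assoc, ← hQa] at hfin
    refine hfin.mono ?_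
    simp only [Complex.norm_I, Complex.norm_real, Real.norm_eq_abs, abs_norm]
    nlinarith [norm_nonneg Q]

lemma TNB.mul_right {T : 𝓗 →L[ℂ] 𝓗} {c : ℝ} (Q : 𝓗 →L[ℂ] 𝓗) (hc : 0 ≤ c) (h : TNB T c) :
    TNB (T * Q) (2 * ‖Q‖ * c) := by
  rcases eq_or_ne Q 0 with rfl | hQ0
  · intro n e f he hf
    simp [inner_zero_right]
  · set a : 𝓗 →L[ℂ] 𝓗 := ((‖Q‖ : ℂ))⁻¹ • Q with ha_def
    have hQnz : ((‖Q‖ : ℂ)) ≠ 0 := by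
      exact_mod_cast Complex.ofReal_ne_zero.mpr (norm_ne_zero_iff.mpr hQ0)
    have hQa : Q = ((‖Q‖ : ℂ)) • a := by
      rw [ha_def, smul_smul, mul_inv_cancel₀ hQnz, one_smul]
    have ha1 : ‖a‖ ≤ 1 := by
      rw [ha_def, norm_smul, norm_inv]
      simp only [Complex.norm_real, Real.norm_eq_abs, abs_norm]
      rw [inv_mul_cancel₀ (norm_ne_zero_iff.mpr hQ0)]
    set x : 𝓗 →L[ℂ] 𝓗 := (2⁻¹:ℂ) • (a + star a) with hx_def
    set y : 𝓗 →L[ℂ] 𝓗 := (-(Complex.I) * 2⁻¹ : ℂ) • (a - star a) with hy_def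
    have hxsa : IsSelfAdjoint x := by
      show star x = x
      rw [hx_def]
      simp only [star_smul, star_add, star_star]
      rw [add_comm (star a) a]
      congr 1
      simp [Complex.ext_iff]
    have hysa : IsSelfAdjoint y := by
      show star y = y
      rw [hy_def]
      simp only [star_smul, star_sub, star_star, star_mul', star_neg, Complex.star_def,
        Complex.conj_I, map_inv₀, map_ofNat]
      module
    have hx1 : ‖x‖ ≤ 1 := by
      rw [hx_def, norm_smul]
      have h1 : ‖(2⁻¹:ℂ)‖ = 2⁻¹ := by norm_num
      rw [h1]
      have h2 : ‖a + star a‖ ≤ 2 := by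
        calc ‖a + star a‖ ≤ ‖a‖ + ‖star a‖ := norm_add_le _ _
        _ ≤ 2 := by rw [norm_star]; linarith
      linarith
    have hy1 : ‖y‖ ≤ 1 := by
      rw [hy_def, norm_smul]
      have h1 : ‖(-(Complex.I) * 2⁻¹ : ℂ)‖ = 2⁻¹ := by simp [norm_mul]
      rw [h1]
      have h2 : ‖a - star a‖ ≤ 2 := by
        calc ‖a - star a‖ ≤ ‖a‖ + ‖star a‖ := norm_sub_le _ _
        _ ≤ 2 := by rw [norm_star]; linarith
      linarith
    have hxy : a = x + Complex.I • y := by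
      have hs : Complex.I • y = (2⁻¹:ℂ) • (a - star a) := by
        rw [hy_def, smul_smul]
        congr 1
        linear_combination (-(2⁻¹:ℂ)) * Complex.I_sq
      rw [hs, hx_def]; module
    obtain ⟨u₁, hu₁a, hu₁b, hu₁c⟩ := exists_unitary_half x hxsa hx1
    obtain ⟨u₂, hu₂a, hu₂b, hu₂c⟩ := exists_unitary_half y hysa hy1
    have l1 : TNB (T * u₁) c := h.unitary_right hu₁a
    have l2 : TNB (T * star u₁) c :=
      h.unitary_right (by rw [star_star]; exact hu₁b)
    have l3 : TNB (T * u₂) c := h.unitary_right hu₂a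
    have l4 : TNB (T * star u₂) c :=
      h.unitary_right (by rw [star_star]; exact hu₂b)
    have hhalf : ‖(2⁻¹:ℂ)‖ = 2⁻¹ := by norm_num
    have hxT : TNB (T * x) c := by
      have heq : T * x = (2⁻¹:ℂ) • (T * u₁) + (2⁻¹:ℂ) • (T * star u₁) := by
        rw [hu₁c, mul_smul_comm, mul_add, smul_add]
      have h5 := (l1.smul (2⁻¹:ℂ)).add (l2.smul (2⁻¹:ℂ))
      rw [← heq] at h5
      refine h5.mono ?_
      rw [hhalf]; linarith
    have hyT : TNB (T * y) c := by
      have heq : T * y = (2⁻¹:ℂ) • (T * u₂) + (2⁻¹:ℂ) • (T * star u₂) := by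
        rw [hu₂c, mul_smul_comm, mul_add, smul_add]
      have h5 := (l3.smul (2⁻¹:ℂ)).add (l4.smul (2⁻¹:ℂ))
      rw [← heq] at h5
      refine h5.mono ?_
      rw [hhalf]; linarith
    have haT : TNB (T * a) (c + ‖Complex.I‖ * c) := by
      have heq : T * a = T * x + Complex.I • (T * y) := by
        rw [hxy]; simp only [mul_add, mul_smul_comm]
      have h5 := hxT.add (hyT.smul Complex.I)
      rwa [← heq] at h5
    have hfin := haT.smul ((‖Q‖ : ℂ))
    rw [← mul_smul_comm, ← hQa] at hfin
    refine hfin.mono ?_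
    simp only [Complex.norm_I, Complex.norm_real, Real.norm_eq_abs, abs_norm]
    nlinarith [norm_nonneg Q]

lemma isUnit_sub_smul_I {H : 𝓗 →L[ℂ] 𝓗} (hH : IsSelfAdjoint H) :
    IsUnit (H - Complex.I • (1 : 𝓗 →L[ℂ] 𝓗)) := by
  have h : Complex.I ∉ spectrum ℂ H := by
    intro hmem
    have := hH.mem_spectrum_eq_re hmem
    simp [Complex.ext_iff] at this
  have h2 := spectrum.notMem_iff.mp h
  rw [Algebra.algebraMap_eq_smul_one] at h2
  simpa [neg_sub] using h2.neg

lemma isUnit_add_smul_I {H : 𝓗 →L[ℂ] 𝓗} (hH : IsSelfAdjoint H) :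
    IsUnit (H + Complex.I • (1 : 𝓗 →L[ℂ] 𝓗)) := by
  have h : -Complex.I ∉ spectrum ℂ H := by
    intro hmem
    have := hH.mem_spectrum_eq_re hmem
    simp [Complex.ext_iff] at this
  have h2 := spectrum.notMem_iff.mp h
  rw [Algebra.algebraMap_eq_smul_one] at h2
  simpa [neg_sub, neg_smul, sub_neg_eq_add] using h2.neg

theorem resolvent_commutator_traceClass
    (H H₀ Q : 𝓗 →L[ℂ] 𝓗) (hH : IsSelfAdjoint H) (hH₀ : IsSelfAdjoint H₀)
    (hQ : Q * H₀ = H₀ * Q) :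
    (Ring.inverse (H - Complex.I • (1 : 𝓗 →L[ℂ] 𝓗)) * (H * Q - Q * H) *
        Ring.inverse (H + Complex.I • (1 : 𝓗 →L[ℂ] 𝓗)) =
      -(((1 : 𝓗 →L[ℂ] 𝓗) + (2 * Complex.I) • Ring.inverse (H - Complex.I • (1 : 𝓗 →L[ℂ] 𝓗))) *
        ((Ring.inverse (H + Complex.I • (1 : 𝓗 →L[ℂ] 𝓗)) -
            Ring.inverse (H₀ + Complex.I • (1 : 𝓗 →L[ℂ] 𝓗))) * Q -
          Q * (Ring.inverse (H + Complex.I • (1 : 𝓗 →L[ℂ] 𝓗)) -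
            Ring.inverse (H₀ + Complex.I • (1 : 𝓗 →L[ℂ] 𝓗)))))) ∧
      (IsTraceClass (Ring.inverse (H + Complex.I • (1 : 𝓗 →L[ℂ] 𝓗)) -
          Ring.inverse (H₀ + Complex.I • (1 : 𝓗 →L[ℂ] 𝓗))) →
        IsTraceClass (Ring.inverse (H - Complex.I • (1 : 𝓗 →L[ℂ] 𝓗)) * (H * Q - Q * H) *
            Ring.inverse (H + Complex.I • (1 : 𝓗 →L[ℂ] 𝓗))) ∧
          traceNorm (Ring.inverse (H - Complex.I • (1 : 𝓗 →L[ℂ] 𝓗)) * (H * Q - Q * H) *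
              Ring.inverse (H + Complex.I • (1 : 𝓗 →L[ℂ] 𝓗))) ≤
            6 * ‖Q‖ * traceNorm (Ring.inverse (H + Complex.I • (1 : 𝓗 →L[ℂ] 𝓗)) -
              Ring.inverse (H₀ + Complex.I • (1 : 𝓗 →L[ℂ] 𝓗)))) := by
  have hA : IsUnit (H + Complex.I • (1 : 𝓗 →L[ℂ] 𝓗)) := isUnit_add_smul_I hH
  have hB : IsUnit (H - Complex.I • (1 : 𝓗 →L[ℂ] 𝓗)) := isUnit_sub_smul_I hH
  have hA₀ : IsUnit (H₀ + Complex.I • (1 : 𝓗 →L[ℂ] 𝓗)) := isUnit_add_smul_I hH₀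
  set J : 𝓗 →L[ℂ] 𝓗 := Complex.I • 1 with hJ_def
  set A := H + J with hAd
  set B := H - J with hBd
  set A₀ := H₀ + J with hA₀d
  set R := Ring.inverse A with hRd
  set R' := Ring.inverse B with hR'd
  set R₀ := Ring.inverse A₀ with hR₀d
  have hAR : A * R = 1 := Ring.mul_inverse_cancel A hA
  have hRA : R * A = 1 := Ring.inverse_mul_cancel A hA
  have hBR' : B * R' = 1 := Ring.mul_inverse_cancel B hB
  have hR'B : R' * B = 1 := Ring.inverse_mul_cancel B hB
  have hA₀R₀ : A₀ * R₀ = 1 := Ring.mul_inverse_cancel A₀ hA₀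
  have hR₀A₀ : R₀ * A₀ = 1 := Ring.inverse_mul_cancel A₀ hA₀
  have cRA : ∀ X : 𝓗 →L[ℂ] 𝓗, R * (A * X) = X := fun X => by
    rw [← mul_assoc, hRA, one_mul]
  have cR'B : ∀ X : 𝓗 →L[ℂ] 𝓗, R' * (B * X) = X := fun X => by
    rw [← mul_assoc, hR'B, one_mul]
  have cR₀A₀ : ∀ X : 𝓗 →L[ℂ] 𝓗, R₀ * (A₀ * X) = X := fun X => by
    rw [← mul_assoc, hR₀A₀, one_mul]
  have hJc : ∀ X : 𝓗 →L[ℂ] 𝓗, J * X = X * J := fun X => by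
    rw [hJ_def, smul_mul_assoc, mul_smul_comm, one_mul, mul_one]
  have hQA₀ : Q * A₀ = A₀ * Q := by
    rw [hA₀d, mul_add, add_mul, hQ, hJc Q]
  have hQR₀ : Q * R₀ = R₀ * Q := by
    have h1 := congrArg (fun X => R₀ * X * R₀) hQA₀
    simp only [mul_assoc, hA₀R₀, mul_one, cR₀A₀] at h1
    exact h1.symm
  have hHQ : H * Q - Q * H = A * Q - Q * A := by
    rw [hAd, add_mul, mul_add, hJc Q]
    abel
  have hABd2 : A - B = (2 * Complex.I) • (1 : 𝓗 →L[ℂ] 𝓗) := by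
    rw [hAd, hBd, hJ_def]; module
  have key1 : R * (A * Q - Q * A) * R = Q * R - R * Q := by
    simp only [mul_sub, sub_mul, mul_assoc, cRA, hAR, mul_one]
  have key2 : R' = ((1 : 𝓗 →L[ℂ] 𝓗) + (2 * Complex.I) • R') * R := by
    have h2I : (2 * Complex.I) • R' = R' * (A - B) := by
      rw [hABd2, mul_smul_comm, mul_one]
    rw [h2I, add_mul, one_mul, mul_sub, sub_mul]
    rw [mul_assoc R' A R, hAR, mul_one, hR'B, one_mul]
    abel
  have key3 : R * Q - Q * R = (R - R₀) * Q - Q * (R - R₀) := by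
    rw [sub_mul, mul_sub, hQR₀]; abel
  have part1 : R' * (H * Q - Q * H) * R =
      -(((1 : 𝓗 →L[ℂ] 𝓗) + (2 * Complex.I) • R') * ((R - R₀) * Q - Q * (R - R₀))) := by
    rw [hHQ, ← key3]
    have e1 : R' * (A * Q - Q * A) * R
        = ((1 : 𝓗 →L[ℂ] 𝓗) + (2 * Complex.I) • R') * (R * (A * Q - Q * A) * R) := by
      conv_lhs => rw [key2]
      simp only [mul_assoc]
    rw [e1, key1, ← mul_neg, neg_sub]
  refine ⟨part1, fun hD => ?_⟩
  set W := (1 : 𝓗 →L[ℂ] 𝓗) + (2 * Complex.I) • R' with hWd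
  set D := R - R₀ with hDd
  have hABcomm : A * B = B * A := by
    rw [hAd, hBd]
    simp only [mul_add, add_mul, mul_sub, sub_mul, hJc H]
    abel
  have hstarA : star A = B := by
    rw [hAd, hBd, hJ_def, star_add, star_smul, star_one, hH.star_eq]
    simp only [Complex.star_def, Complex.conj_I]
    module
  have hstarB : star B = A := by
    rw [← hstarA, star_star]
  have hstarR' : star R' = R := by
    have h1 : star R' * A = 1 := by
      have h2 := congrArg star hBR'
      rwa [star_mul, star_one, hstarB] at h2
    calc star R' = star R' * (A * R) := by rw [hAR, mul_one]
    _ = star R' * A * R := by rw [mul_assoc]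
    _ = R := by rw [h1, one_mul]
  have hWAR' : W = A * R' := by
    rw [hWd, sub_eq_iff_eq_add.mp hABd2, add_mul, smul_mul_assoc, one_mul, hBR']
    abel
  have hstarW : star W = R * B := by
    rw [hWAR', star_mul, hstarR', hstarA]
  have hRB : R * B = B * R := by
    have h1 : B = B * (A * R) := by rw [hAR, mul_one]
    calc R * B = R * (B * (A * R)) := by rw [← h1]
    _ = R * (A * (B * R)) := by rw [← mul_assoc B A R, ← hABcomm, mul_assoc]
    _ = B * R := cRA _
  have hWu1 : star W * W = 1 := by
    rw [hstarW, hWAR']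
    calc R * B * (A * R') = R * (B * A * R') := by simp only [mul_assoc]
    _ = R * (A * (B * R')) := by rw [← hABcomm]; simp only [mul_assoc]
    _ = R * (A * 1) := by rw [hBR']
    _ = 1 := by rw [mul_one, hRA]
  have hR'R : R' * R = R * R' := by
    calc R' * R = R' * (R * (B * R')) := by rw [hBR', mul_one]
    _ = R' * (B * (R * R')) := by rw [← mul_assoc R B R', hRB, mul_assoc]
    _ = R * R' := cR'B _
  have hWu2 : W * star W = 1 := by
    rw [hstarW, hWAR']
    calc A * R' * (R * B) = A * (R' * R * B) := by simp only [mul_assoc]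
    _ = A * (R * (R' * B)) := by rw [hR'R]; simp only [mul_assoc]
    _ = A * (R * 1) := by rw [hR'B]
    _ = 1 := by rw [mul_one, hAR]
  have hc0 : 0 ≤ traceNorm D := hD.traceNorm_nonneg
  have hTB : TNB D (traceNorm D) := hD.tnb
  have t1 : TNB (D * Q) (2 * ‖Q‖ * traceNorm D) := hTB.mul_right Q hc0
  have t2 : TNB (Q * D) (2 * ‖Q‖ * traceNorm D) := hTB.mul_left Q hc0
  have t3 : TNB (D * Q - Q * D) (2 * ‖Q‖ * traceNorm D + 2 * ‖Q‖ * traceNorm D) := by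
    rw [sub_eq_add_neg]; exact t1.add t2.neg
  have t4 := t3.unitary_left hWu1 hWu2
  have t5 := t4.neg
  rw [part1]
  refine ⟨t5.isTraceClass, le_trans t5.traceNorm_le ?_⟩
  nlinarith [norm_nonneg Q, hc0]
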